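/- arXiv:1708.03000 — 2 statements merged into one kernel-verified Lean document; each statement's English description precedes it below -/
import Mathlib

section
/- There is no injective linear map φ : ℤ⁴ → ℤ⁶ such that, with respect to the negative of the standard inner product on ℤ⁶ (i.e. ⟨x,y⟩ = -∑ xᵢyᵢ), the images e₁ = φ(b₁), e₂ = φ(b₂), e₃ = φ(b₃), e₄ = φ(b₄) of the standard basis satisfy ⟨eᵢ,eᵢ⟩ = -3 for all i, ⟨e₁,e₂⟩ = ⟨e₂,e₃⟩ = ⟨e₃,e₄⟩ = ⟨e₄,e₁⟩ = 1, and ⟨e₁,e₃⟩ = ⟨e₂,e₄⟩ = 0. -/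
/-- The negative of the standard inner product on `Fin n → ℤ`. -/
def negPairing {n : ℕ} (x y : Fin n → ℤ) : ℤ := -∑ i, x i * y i
/-! ### Auxiliary machinery: base-3 encodings of vectors in `{-1,0,1}^6` -/

/-- The `k`-th base-3 "digit" of `n` (for `k` a power of 3), shifted to `{-1,0,1}`. -/
def ent (n k : ℕ) : ℤ := (n / k % 3 : ℕ) - 1

/-- Dot product of two encoded vectors. -/
def dint (a b : ℕ) : ℤ :=
  ent a 1 * ent b 1 + ent a 3 * ent b 3 + ent a 9 * ent b 9 +
  ent a 27 * ent b 27 + ent a 81 * ent b 81 + ent a 243 * ent b 243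

/-- Encodings of vectors `v ∈ {-1,0,1}^6` with `v·v = 3` and `v·(1,1,1,0,0,0) = -1`. -/
def L2 : List ℕ := [31, 37, 39, 85, 91, 93, 139, 145, 147, 193, 199, 201, 247, 253, 255, 301, 307, 309, 353, 357, 369, 409, 415, 417, 463, 469, 471, 517, 523, 525, 571, 577, 579, 625, 631, 633, 679, 685, 687]

/-- Encodings of vectors `v ∈ {-1,0,1}^6` with `v·v = 3` and `v·(1,1,1,0,0,0) = 0`. -/
def L0 : List ℕ := [13, 67, 113, 115, 119, 123, 127, 129, 175, 229, 275, 277, 281, 285, 289, 291, 329, 331, 335, 339, 343, 345, 383, 385, 389, 393, 397, 399, 437, 439, 443, 447, 451, 453, 499, 553, 599, 601, 605, 609, 613, 615, 661, 715]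

def check : Bool :=
  L2.all fun nb =>
    L0.all fun nc => (dint nb nc != -1) ||
      (L2.all fun nd => (dint nc nd != -1) || (dint nb nd != 0))

set_option maxRecDepth 100000 in
set_option maxHeartbeats 2000000 in
lemma check_true : check = true := by decide

set_option maxRecDepth 100000 in
set_option maxHeartbeats 2000000 in
lemma mem_L2 : ∀ m : ℕ, m < 729 → dint m m = 3 → dint 377 m = -1 → m ∈ L2 := by decide

set_option maxRecDepth 100000 in
set_option maxHeartbeats 2000000 in
lemma mem_L0 : ∀ m : ℕ, m < 729 → dint m m = 3 → dint 377 m = 0 → m ∈ L0 := by decide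

lemma no_quad : ∀ nb ∈ L2, ∀ nc ∈ L0, dint nb nc = -1 →
    ∀ nd ∈ L2, dint nc nd = -1 → dint nb nd = 0 → False := by
  have h := check_true
  simp only [check, List.all_eq_true, Bool.or_eq_true, bne_iff_ne, ne_eq] at h
  intro nb hb nc hc h1 nd hd h2 h3
  rcases h nb hb nc hc with h' | h'
  · exact h' h1
  rcases h' nd hd with h'' | h''
  · exact h'' h2
  · exact h'' h3

set_option maxHeartbeats 2000000 in
lemma ent_enc (x0 x1 x2 x3 x4 x5 : ℤ)
    (h0 : -1 ≤ x0 ∧ x0 ≤ 1) (h1 : -1 ≤ x1 ∧ x1 ≤ 1) (h2 : -1 ≤ x2 ∧ x2 ≤ 1)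
    (h3 : -1 ≤ x3 ∧ x3 ≤ 1) (h4 : -1 ≤ x4 ∧ x4 ≤ 1) (h5 : -1 ≤ x5 ∧ x5 ≤ 1) :
    ∃ n : ℕ, n < 729 ∧ ent n 1 = x0 ∧ ent n 3 = x1 ∧ ent n 9 = x2 ∧
      ent n 27 = x3 ∧ ent n 81 = x4 ∧ ent n 243 = x5 := by
  refine ⟨(x0+1).toNat + 3*(x1+1).toNat + 9*(x2+1).toNat + 27*(x3+1).toNat
      + 81*(x4+1).toNat + 243*(x5+1).toNat, by omega, ?_, ?_, ?_, ?_, ?_, ?_⟩ <;>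
    simp only [ent] <;> omega

/-- The core finite obstruction, after normalizing the first vector to `(1,1,1,0,0,0)`. -/
lemma key (b c d : Fin 6 → ℤ)
    (hb : ∀ j, -1 ≤ b j ∧ b j ≤ 1) (hc : ∀ j, -1 ≤ c j ∧ c j ≤ 1)
    (hd : ∀ j, -1 ≤ d j ∧ d j ≤ 1)
    (hbb : b 0 * b 0 + b 1 * b 1 + b 2 * b 2 + b 3 * b 3 + b 4 * b 4 + b 5 * b 5 = 3)
    (hcc : c 0 * c 0 + c 1 * c 1 + c 2 * c 2 + c 3 * c 3 + c 4 * c 4 + c 5 * c 5 = 3)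
    (hdd : d 0 * d 0 + d 1 * d 1 + d 2 * d 2 + d 3 * d 3 + d 4 * d 4 + d 5 * d 5 = 3)
    (hab : b 0 + b 1 + b 2 = -1)
    (hbc : b 0 * c 0 + b 1 * c 1 + b 2 * c 2 + b 3 * c 3 + b 4 * c 4 + b 5 * c 5 = -1)
    (hac : c 0 + c 1 + c 2 = 0)
    (hcd : c 0 * d 0 + c 1 * d 1 + c 2 * d 2 + c 3 * d 3 + c 4 * d 4 + c 5 * d 5 = -1)
    (hda : d 0 + d 1 + d 2 = -1)
    (hbd : b 0 * d 0 + b 1 * d 1 + b 2 * d 2 + b 3 * d 3 + b 4 * d 4 + b 5 * d 5 = 0) :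
    False := by
  obtain ⟨nb, hnb, eb0, eb1, eb2, eb3, eb4, eb5⟩ :=
    ent_enc (b 0) (b 1) (b 2) (b 3) (b 4) (b 5) (hb 0) (hb 1) (hb 2) (hb 3) (hb 4) (hb 5)
  obtain ⟨nc, hnc, ec0, ec1, ec2, ec3, ec4, ec5⟩ :=
    ent_enc (c 0) (c 1) (c 2) (c 3) (c 4) (c 5) (hc 0) (hc 1) (hc 2) (hc 3) (hc 4) (hc 5)
  obtain ⟨nd, hnd, ed0, ed1, ed2, ed3, ed4, ed5⟩ :=
    ent_enc (d 0) (d 1) (d 2) (d 3) (d 4) (d 5) (hd 0) (hd 1) (hd 2) (hd 3) (hd 4) (hd 5)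
  have a0 : ent 377 1 = 1 := by decide
  have a1 : ent 377 3 = 1 := by decide
  have a2 : ent 377 9 = 1 := by decide
  have a3 : ent 377 27 = 0 := by decide
  have a4 : ent 377 81 = 0 := by decide
  have a5 : ent 377 243 = 0 := by decide
  have mb : nb ∈ L2 := by
    refine mem_L2 nb hnb ?_ ?_ <;> simp only [dint]
    · rw [eb0, eb1, eb2, eb3, eb4, eb5]; exact hbb
    · rw [a0, a1, a2, a3, a4, a5, eb0, eb1, eb2, eb3, eb4, eb5]; linarith
  have mc : nc ∈ L0 := by
    refine mem_L0 nc hnc ?_ ?_ <;> simp only [dint]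
    · rw [ec0, ec1, ec2, ec3, ec4, ec5]; exact hcc
    · rw [a0, a1, a2, a3, a4, a5, ec0, ec1, ec2, ec3, ec4, ec5]; linarith
  have md : nd ∈ L2 := by
    refine mem_L2 nd hnd ?_ ?_ <;> simp only [dint]
    · rw [ed0, ed1, ed2, ed3, ed4, ed5]; exact hdd
    · rw [a0, a1, a2, a3, a4, a5, ed0, ed1, ed2, ed3, ed4, ed5]; linarith
  refine no_quad nb mb nc mc ?_ nd md ?_ ?_ <;> simp only [dint]
  · rw [eb0, eb1, eb2, eb3, eb4, eb5, ec0, ec1, ec2, ec3, ec4, ec5]; exact hbc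
  · rw [ec0, ec1, ec2, ec3, ec4, ec5, ed0, ed1, ed2, ed3, ed4, ed5]; exact hcd
  · rw [eb0, eb1, eb2, eb3, eb4, eb5, ed0, ed1, ed2, ed3, ed4, ed5]; exact hbd
/-- The rank-4 Goeritz form of the knot 8₁₈ (a 4-cycle of `-3`-vertices) does not
embed isometrically into the negative definite diagonal lattice `(ℤ⁶, -Id)`. -/
theorem stmt_0 :
    ¬ ∃ φ : (Fin 4 → ℤ) →ₗ[ℤ] (Fin 6 → ℤ),
      Function.Injective φ ∧
      (∀ i : Fin 4, negPairing (φ (Pi.single i 1)) (φ (Pi.single i 1)) = -3) ∧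
      negPairing (φ (Pi.single 0 1)) (φ (Pi.single 1 1)) = 1 ∧
      negPairing (φ (Pi.single 1 1)) (φ (Pi.single 2 1)) = 1 ∧
      negPairing (φ (Pi.single 2 1)) (φ (Pi.single 3 1)) = 1 ∧
      negPairing (φ (Pi.single 3 1)) (φ (Pi.single 0 1)) = 1 ∧
      negPairing (φ (Pi.single 0 1)) (φ (Pi.single 2 1)) = 0 ∧
      negPairing (φ (Pi.single 1 1)) (φ (Pi.single 3 1)) = 0 := by
  rintro ⟨φ, -, hdiag, h01, h12, h23, h30, h02, h13⟩
  have D0 := hdiag 0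
  have D1 := hdiag 1
  have D2 := hdiag 2
  have D3 := hdiag 3
  simp only [negPairing] at D0 D1 D2 D3 h01 h12 h23 h30 h02 h13
  set a : Fin 6 → ℤ := φ (Pi.single 0 1) with ha
  set b : Fin 6 → ℤ := φ (Pi.single 1 1) with hb
  set c : Fin 6 → ℤ := φ (Pi.single 2 1) with hc
  set d : Fin 6 → ℤ := φ (Pi.single 3 1) with hd
  have Daa : ∑ j, a j * a j = 3 := by linarith
  have Dbb : ∑ j, b j * b j = 3 := by linarith
  have Dcc : ∑ j, c j * c j = 3 := by linarith
  have Ddd : ∑ j, d j * d j = 3 := by linarith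
  have Dab : ∑ j, a j * b j = -1 := by linarith
  have Dbc : ∑ j, b j * c j = -1 := by linarith
  have Dcd : ∑ j, c j * d j = -1 := by linarith
  have Dda : ∑ j, d j * a j = -1 := by linarith
  have Dac : ∑ j, a j * c j = 0 := by linarith
  have Dbd : ∑ j, b j * d j = 0 := by linarith
  -- all entries lie in {-1, 0, 1}
  have bnd : ∀ v : Fin 6 → ℤ, (∑ j, v j * v j) = 3 → ∀ j, -1 ≤ v j ∧ v j ≤ 1 := by
    intro v hv j
    have h1 : v j * v j ≤ 3 := by
      rw [← hv]
      exact Finset.single_le_sum (f := fun i => v i * v i)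
        (fun i _ => mul_self_nonneg (v i)) (Finset.mem_univ j)
    constructor <;> nlinarith
  have Ba := bnd a Daa
  have Bb := bnd b Dbb
  have Bc := bnd c Dcc
  have Bd := bnd d Ddd
  -- the support of `a` has exactly three elements
  set S : Finset (Fin 6) := Finset.univ.filter (fun j => a j ≠ 0) with hSdef
  have hcard : S.card = 3 := by
    have h1 : ∀ j, a j * a j = (if a j ≠ 0 then (1 : ℤ) else 0) := by
      intro j
      have := Ba j
      have h3 : a j = -1 ∨ a j = 0 ∨ a j = 1 := by omega
      rcases h3 with h | h | h <;> norm_num [h]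
    have h2 : ∑ j, a j * a j = (S.card : ℤ) := by
      rw [hSdef, ← Finset.sum_boole]
      exact Finset.sum_congr rfl fun j _ => h1 j
    have h4 : (S.card : ℤ) = 3 := h2.symm.trans Daa
    exact_mod_cast h4
  obtain ⟨j1, j2, j3, hj12, hj13, hj23, hSeq⟩ := Finset.card_eq_three.mp hcard
  have hccard : Sᶜ.card = 3 := by simp [Finset.card_compl, hcard]
  obtain ⟨j4, j5, j6, hj45, hj46, hj56, hCeq⟩ := Finset.card_eq_three.mp hccard
  have m1 : a j1 ≠ 0 := by
    have h : j1 ∈ S := by rw [hSeq]; simp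
    rw [hSdef] at h; simpa using h
  have m2 : a j2 ≠ 0 := by
    have h : j2 ∈ S := by rw [hSeq]; simp
    rw [hSdef] at h; simpa using h
  have m3 : a j3 ≠ 0 := by
    have h : j3 ∈ S := by rw [hSeq]; simp
    rw [hSdef] at h; simpa using h
  have m4 : a j4 = 0 := by
    have h : j4 ∈ Sᶜ := by rw [hCeq]; simp
    have h' := Finset.mem_compl.mp h
    rw [hSdef] at h'; simpa using h'
  have m5 : a j5 = 0 := by
    have h : j5 ∈ Sᶜ := by rw [hCeq]; simp
    have h' := Finset.mem_compl.mp h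
    rw [hSdef] at h'; simpa using h'
  have m6 : a j6 = 0 := by
    have h : j6 ∈ Sᶜ := by rw [hCeq]; simp
    have h' := Finset.mem_compl.mp h
    rw [hSdef] at h'; simpa using h'
  -- the permutation of coordinates moving the support of `a` to the first three slots
  set σ : Fin 6 → Fin 6 := ![j1, j2, j3, j4, j5, j6] with hσ
  have hσ0 : σ 0 = j1 := rfl
  have hσ1 : σ 1 = j2 := rfl
  have hσ2 : σ 2 = j3 := rfl
  have hσ3 : σ 3 = j4 := rfl
  have hσ4 : σ 4 = j5 := rfl
  have hσ5 : σ 5 = j6 := rfl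
  have hsurj : Function.Surjective σ := by
    intro y
    by_cases hy : y ∈ S
    · rw [hSeq] at hy
      simp only [Finset.mem_insert, Finset.mem_singleton] at hy
      rcases hy with rfl | rfl | rfl
      · exact ⟨0, hσ0⟩
      · exact ⟨1, hσ1⟩
      · exact ⟨2, hσ2⟩
    · have hy' : y ∈ Sᶜ := Finset.mem_compl.mpr hy
      rw [hCeq] at hy'
      simp only [Finset.mem_insert, Finset.mem_singleton] at hy'
      rcases hy' with rfl | rfl | rfl
      · exact ⟨3, hσ3⟩
      · exact ⟨4, hσ4⟩
      · exact ⟨5, hσ5⟩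
  have hbij : Function.Bijective σ := Finite.surjective_iff_bijective.mp hsurj
  -- the sign-flip making all support entries of `a` equal to `+1`
  set E : Fin 6 → ℤ := fun j => if a j < 0 then -1 else 1 with hE
  have hEpm : ∀ j, E j = 1 ∨ E j = -1 := by
    intro j; rw [hE]; dsimp only; split
    · right; rfl
    · left; rfl
  have hEsq : ∀ j, E j * E j = 1 := by
    intro j; rcases hEpm j with h | h <;> rw [h] <;> norm_num
  have hEa : ∀ j, a j ≠ 0 → E j * a j = 1 := by
    intro j hj
    have := Ba j
    have h2 : a j = 1 ∨ a j = -1 := by omega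
    rw [hE]; dsimp only
    rcases h2 with h | h <;> rw [h] <;> norm_num
  -- dot products are preserved by the transformation
  have trans : ∀ u v : Fin 6 → ℤ,
      (∑ k, (E (σ k) * u (σ k)) * (E (σ k) * v (σ k))) = ∑ j, u j * v j := by
    intro u v
    have step : ∀ j, (E j * u j) * (E j * v j) = u j * v j := by
      intro j
      have h := hEsq j
      calc (E j * u j) * (E j * v j) = (E j * E j) * (u j * v j) := by ring
        _ = u j * v j := by rw [h, one_mul]
    calc (∑ k, (E (σ k) * u (σ k)) * (E (σ k) * v (σ k)))
        = ∑ k, u (σ k) * v (σ k) := Finset.sum_congr rfl fun k _ => step (σ k)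
      _ = ∑ j, u j * v j := hbij.sum_comp fun j => u j * v j
  -- values of the transformed first vector
  have hA0 : E (σ 0) * a (σ 0) = 1 := by rw [hσ0]; exact hEa j1 m1
  have hA1 : E (σ 1) * a (σ 1) = 1 := by rw [hσ1]; exact hEa j2 m2
  have hA2 : E (σ 2) * a (σ 2) = 1 := by rw [hσ2]; exact hEa j3 m3
  have hA3 : E (σ 3) * a (σ 3) = 0 := by rw [hσ3, m4, mul_zero]
  have hA4 : E (σ 4) * a (σ 4) = 0 := by rw [hσ4, m5, mul_zero]
  have hA5 : E (σ 5) * a (σ 5) = 0 := by rw [hσ5, m6, mul_zero]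
  -- transported dot products, in explicit coordinates
  have Hbb := (trans b b).trans Dbb
  have Hcc := (trans c c).trans Dcc
  have Hdd := (trans d d).trans Ddd
  have Hab := (trans a b).trans Dab
  have Hbc := (trans b c).trans Dbc
  have Hcd := (trans c d).trans Dcd
  have Hda := (trans d a).trans Dda
  have Hac := (trans a c).trans Dac
  have Hbd := (trans b d).trans Dbd
  rw [Fin.sum_univ_six] at Hbb Hcc Hdd Hab Hbc Hcd Hda Hac Hbd
  rw [hA0, hA1, hA2, hA3, hA4, hA5] at Hab Hac Hda
  -- in Hda the `a`-factors are on the right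
  have bndE : ∀ (v : Fin 6 → ℤ), (∀ j, -1 ≤ v j ∧ v j ≤ 1) →
      ∀ k : Fin 6, -1 ≤ E (σ k) * v (σ k) ∧ E (σ k) * v (σ k) ≤ 1 := by
    intro v hv k
    rcases hEpm (σ k) with h | h
    · rw [h, one_mul]; exact hv (σ k)
    · rw [h, neg_one_mul]
      have := hv (σ k)
      omega
  have hab' : E (σ 0) * b (σ 0) + E (σ 1) * b (σ 1) + E (σ 2) * b (σ 2) = -1 := by linarith
  have hac' : E (σ 0) * c (σ 0) + E (σ 1) * c (σ 1) + E (σ 2) * c (σ 2) = 0 := by linarith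
  have hda' : E (σ 0) * d (σ 0) + E (σ 1) * d (σ 1) + E (σ 2) * d (σ 2) = -1 := by linarith
  exact key (fun k => E (σ k) * b (σ k)) (fun k => E (σ k) * c (σ k))
    (fun k => E (σ k) * d (σ k)) (bndE b Bb) (bndE c Bc) (bndE d Bd)
    Hbb Hcc Hdd hab' Hbc hac' Hcd hda' Hbd
end

section
/- There is no injective linear map φ : ℤ⁸ → ℤ⁸ preserving pairings, where the source carries the bilinear form with basis e₁,…,e₈ satisfying eᵢ·eᵢ = -2 for i = 1,…,6, e₇·e₇ = -3, e₈·e₈ = -15, eᵢ·e_{i+1} = 1 for i = 1,…,6, e₈·eⱼ = 0 for j ≤ 7, and all other pairings of distinct basis vectors zero, and the target carries the negative of the standard inner product on ℤ⁸. -/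
/-- Gram matrix of the Goeritz form of `-9₂` (a chain `-2,…,-2,-3`) direct sum
with `[-15]`. -/
def gram9_2 : Fin 8 → Fin 8 → ℤ := fun i j =>
  if i = j then (if (i : ℕ) < 6 then -2 else if (i : ℕ) = 6 then -3 else -15)
  else if ((i : ℕ) + 1 = (j : ℕ) ∧ (j : ℕ) ≤ 6) ∨ ((j : ℕ) + 1 = (i : ℕ) ∧ (i : ℕ) ≤ 6)
    then 1 else 0

/-- Coefficients expressing the suffix-sum vectors in terms of the images of the basis. -/
def cf : Fin 7 → Fin 8 → ℤ := fun i a =>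
  if (a : ℕ) ≤ 6 ∧ ((i : ℕ) = 6 ∨ (i : ℕ) < (a : ℕ)) then 1 else 0

/-- There are no seven vectors in `ℤ⁸` of norm `3` with all pairwise inner products `2`. -/
theorem no_seven (z : Fin 7 → Fin 8 → ℤ)
    (h : ∀ i j, (∑ k, z i k * z j k) = if i = j then 3 else 2) : False := by
  -- entries in [-1,1]
  have hbd : ∀ i k, -1 ≤ z i k ∧ z i k ≤ 1 := by
    intro i k
    have h1 : z i k * z i k ≤ 3 := by
      have := h i i
      simp only [if_pos rfl] at this
      calc z i k * z i k ≤ ∑ m, z i m * z i m :=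
            Finset.single_le_sum (fun m _ => mul_self_nonneg (z i m)) (Finset.mem_univ k)
        _ = 3 := this
    constructor <;> nlinarith
  -- difference sums
  have hdiff : ∀ i j, i ≠ j → (∑ k, (z i k - z j k) * (z i k - z j k)) = 2 := by
    intro i j hij
    have e : ∀ k, (z i k - z j k) * (z i k - z j k)
        = z i k * z i k + z j k * z j k - 2 * (z i k * z j k) := fun k => by ring
    rw [Finset.sum_congr rfl fun k _ => e k]
    rw [Finset.sum_sub_distrib, Finset.sum_add_distrib, ← Finset.mul_sum]
    rw [h i i, h j j, h i j]
    simp [hij]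
  -- no disagreement pointwise
  have hprod : ∀ i j, i ≠ j → ∀ k, z i k * z j k = (z i k * z i k) * (z j k * z j k) := by
    intro i j hij k
    have h2 : (z i k - z j k) * (z i k - z j k) ≤ 2 := by
      calc (z i k - z j k) * (z i k - z j k)
          ≤ ∑ m, (z i m - z j m) * (z i m - z j m) :=
            Finset.single_le_sum (f := fun m => (z i m - z j m) * (z i m - z j m))
              (fun m _ => mul_self_nonneg _) (Finset.mem_univ k)
        _ = 2 := hdiff i j hij
    obtain ⟨ha1, ha2⟩ := hbd i k
    obtain ⟨hb1, hb2⟩ := hbd j k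
    interval_cases (z i k) <;> interval_cases (z j k) <;> omega
  -- indicator vectors
  set y : Fin 7 → Fin 8 → ℤ := fun i k => z i k * z i k with hy
  have hy01 : ∀ i k, y i k = 0 ∨ y i k = 1 := by
    intro i k
    obtain ⟨ha1, ha2⟩ := hbd i k
    simp only [hy]
    interval_cases (z i k) <;> omega
  have hysum : ∀ i, (∑ k, y i k) = 3 := by
    intro i; have := h i i; simpa using this
  have hypair : ∀ i j, i ≠ j → (∑ k, y i k * y j k) = 2 := by
    intro i j hij
    have : (∑ k, y i k * y j k) = ∑ k, z i k * z j k :=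
      Finset.sum_congr rfl fun k _ => (hprod i j hij k).symm
    rw [this, h i j]; simp [hij]

  classical
  -- extract the swap pair for each i ≠ 6
  have hex : ∀ i : Fin 6, ∃ p q : Fin 8,
      y 6 p = 1 ∧ y i.castSucc p = 0 ∧ y 6 q = 0 ∧ y i.castSucc q = 1 ∧
      ∀ k, k ≠ p → k ≠ q → y 6 k = y i.castSucc k := by
    intro i
    have hne : (6 : Fin 7) ≠ i.castSucc := by
      intro hcon
      have := congrArg (fun t : Fin 7 => (t : ℕ)) hcon
      simp [Fin.coe_castSucc] at this
      omega
    set d : Fin 8 → ℤ := fun k => y 6 k - y i.castSucc k with hd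
    have hdsum : (∑ k, d k) = 0 := by
      simp only [hd, Finset.sum_sub_distrib, hysum]; ring
    have hdsq : (∑ k, d k * d k) = 2 := by
      have e : ∀ k, d k * d k
          = y 6 k * y 6 k + y i.castSucc k * y i.castSucc k
            - 2 * (y 6 k * y i.castSucc k) := fun k => by simp only [hd]; ring
      rw [Finset.sum_congr rfl fun k _ => e k]
      rw [Finset.sum_sub_distrib, Finset.sum_add_distrib, ← Finset.mul_sum]
      have e6 : (∑ k, y 6 k * y 6 k) = 3 := by
        have ept : ∀ k, y 6 k * y 6 k = y 6 k := fun k => by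
          rcases hy01 6 k with h | h <;> simp [h]
        rw [Finset.sum_congr rfl fun k _ => ept k]; exact hysum 6
      have ei : (∑ k, y i.castSucc k * y i.castSucc k) = 3 := by
        have ept : ∀ k, y i.castSucc k * y i.castSucc k = y i.castSucc k := fun k => by
          rcases hy01 i.castSucc k with h | h <;> simp [h]
        rw [Finset.sum_congr rfl fun k _ => ept k]; exact hysum i.castSucc
      rw [e6, ei, hypair 6 i.castSucc hne]; ring
    have hdran : ∀ k, d k = -1 ∨ d k = 0 ∨ d k = 1 := by
      intro k
      have h6 := hy01 6 k
      have hi := hy01 i.castSucc k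
      simp only [hd]; omega
    have h1 : (∑ k, d k) = ((Finset.univ.filter (fun k => d k = 1)).card : ℤ)
        - ((Finset.univ.filter (fun k => d k = -1)).card : ℤ) := by
      rw [← Finset.sum_boole (p := fun k => d k = 1),
          ← Finset.sum_boole (p := fun k => d k = -1), ← Finset.sum_sub_distrib]
      refine Finset.sum_congr rfl fun k _ => ?_
      rcases hdran k with h | h | h <;> simp [h]
    have h2 : (∑ k, d k * d k) = ((Finset.univ.filter (fun k => d k = 1)).card : ℤ)
        + ((Finset.univ.filter (fun k => d k = -1)).card : ℤ) := by
      rw [← Finset.sum_boole (p := fun k => d k = 1),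
          ← Finset.sum_boole (p := fun k => d k = -1), ← Finset.sum_add_distrib]
      refine Finset.sum_congr rfl fun k _ => ?_
      rcases hdran k with h | h | h <;> simp [h]
    rw [hdsum] at h1; rw [hdsq] at h2
    have hA : (Finset.univ.filter (fun k => d k = 1)).card = 1 := by omega
    have hB : (Finset.univ.filter (fun k => d k = -1)).card = 1 := by omega
    obtain ⟨p, hp⟩ := Finset.card_eq_one.mp hA
    obtain ⟨q, hq⟩ := Finset.card_eq_one.mp hB
    have hdp : d p = 1 := by
      have : p ∈ Finset.univ.filter (fun k => d k = 1) := by rw [hp]; simp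
      simpa using this
    have hdq : d q = -1 := by
      have : q ∈ Finset.univ.filter (fun k => d k = -1) := by rw [hq]; simp
      simpa using this
    refine ⟨p, q, ?_, ?_, ?_, ?_, ?_⟩
    · rcases hy01 6 p with h | h
      · exfalso; rcases hy01 i.castSucc p with g | g <;> simp [hd, h, g] at hdp
      · exact h
    · rcases hy01 i.castSucc p with h | h
      · exact h
      · exfalso; rcases hy01 6 p with g | g <;> simp [hd, h, g] at hdp
    · rcases hy01 6 q with h | h
      · exact h
      · exfalso; rcases hy01 i.castSucc q with g | g <;> simp [hd, h, g] at hdq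
    · rcases hy01 i.castSucc q with h | h
      · exfalso; rcases hy01 6 q with g | g <;> simp [hd, h, g] at hdq
      · exact h
    · intro k hkp hkq
      have hk1 : d k ≠ 1 := by
        intro hcon
        have : k ∈ Finset.univ.filter (fun k => d k = 1) := by simp [hcon]
        rw [hp] at this; simp at this; exact hkp this
      have hk2 : d k ≠ -1 := by
        intro hcon
        have : k ∈ Finset.univ.filter (fun k => d k = -1) := by simp [hcon]
        rw [hq] at this; simp at this; exact hkq this
      have : d k = 0 := by rcases hdran k with h | h | h <;> tauto
      simp only [hd] at this; omega
  choose x w hx1 hx2 hw1 hw2 hrest using hex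
  -- basic facts about x and w
  have hxw : ∀ i : Fin 6, x i ≠ w i := by
    intro i hcon
    have := hx1 i; rw [hcon, hw1 i] at this; omega
  have hne6 : ∀ i : Fin 6, (6 : Fin 7) ≠ i.castSucc := by
    intro i hcon
    have := congrArg (fun t : Fin 7 => (t : ℕ)) hcon
    simp [Fin.coe_castSucc] at this
    omega
  -- representation of differences as indicator differences
  have hdrep : ∀ (i : Fin 6) (k : Fin 8),
      y 6 k - y i.castSucc k = (if k = x i then 1 else 0) - (if k = w i then 1 else 0) := by
    intro i k
    by_cases hp : k = x i
    · subst hp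
      rw [if_pos rfl, if_neg (hxw i), hx1 i, hx2 i]
    · by_cases hq : k = w i
      · subst hq
        rw [if_neg (fun hc => hxw i hc.symm), if_pos rfl, hw1 i, hw2 i]
      · rw [if_neg hp, if_neg hq, hrest i k hp hq]; ring
  -- indicator sum lemma
  have hind : ∀ a b : Fin 8,
      (∑ k, (if k = a then (1:ℤ) else 0) * (if k = b then 1 else 0))
        = if a = b then 1 else 0 := by
    intro a b
    rw [Finset.sum_eq_single a (fun c _ hne => by rw [if_neg hne, zero_mul])
        (fun habs => absurd (Finset.mem_univ a) habs)]
    rw [if_pos rfl, one_mul]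
  -- the key pair relation
  have hkey : ∀ i j : Fin 6, i ≠ j →
      (if x i = x j then (1:ℤ) else 0) + (if w i = w j then 1 else 0) = 1 := by
    intro i j hij
    have hij' : i.castSucc ≠ j.castSucc := fun hc => hij (Fin.castSucc_injective _ hc)
    -- sum of products of differences equals 1
    have hsum1 : (∑ k, (y 6 k - y i.castSucc k) * (y 6 k - y j.castSucc k)) = 1 := by
      have e : ∀ k, (y 6 k - y i.castSucc k) * (y 6 k - y j.castSucc k)
          = y 6 k * y 6 k - y 6 k * y j.castSucc k - y i.castSucc k * y 6 k
            + y i.castSucc k * y j.castSucc k := fun k => by ring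
      rw [Finset.sum_congr rfl fun k _ => e k]
      rw [Finset.sum_add_distrib, Finset.sum_sub_distrib, Finset.sum_sub_distrib]
      have e6 : (∑ k, y 6 k * y 6 k) = 3 := by
        have ept : ∀ k, y 6 k * y 6 k = y 6 k := fun k => by
          rcases hy01 6 k with h | h <;> simp [h]
        rw [Finset.sum_congr rfl fun k _ => ept k]; exact hysum 6
      rw [e6, hypair 6 j.castSucc (hne6 j), hypair i.castSucc 6 (fun hc => hne6 i hc.symm),
          hypair i.castSucc j.castSucc hij']
      ring
    rw [Finset.sum_congr rfl fun k _ => by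
      rw [hdrep i k, hdrep j k]] at hsum1
    have e2 : ∀ k, ((if k = x i then (1:ℤ) else 0) - (if k = w i then 1 else 0))
        * ((if k = x j then 1 else 0) - (if k = w j then 1 else 0))
        = (if k = x i then (1:ℤ) else 0) * (if k = x j then 1 else 0)
          - (if k = x i then (1:ℤ) else 0) * (if k = w j then 1 else 0)
          - (if k = w i then (1:ℤ) else 0) * (if k = x j then 1 else 0)
          + (if k = w i then (1:ℤ) else 0) * (if k = w j then 1 else 0) := fun k => by ring
    rw [Finset.sum_congr rfl fun k _ => e2 k, Finset.sum_add_distrib,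
        Finset.sum_sub_distrib, Finset.sum_sub_distrib, hind, hind, hind, hind] at hsum1
    have hc1 : x i ≠ w j := by
      intro hc
      have := hx1 i; rw [hc, hw1 j] at this; omega
    have hc2 : w i ≠ x j := by
      intro hc
      have := hx1 j; rw [← hc, hw1 i] at this; omega
    rw [if_neg hc1, if_neg hc2] at hsum1
    linarith
  have key1 : ∀ i j : Fin 6, i ≠ j → x i = x j → w i ≠ w j := by
    intro i j hij hx hw
    have := hkey i j hij
    rw [if_pos hx, if_pos hw] at this; omega
  have key2 : ∀ i j : Fin 6, i ≠ j → x i ≠ x j → w i = w j := by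
    intro i j hij hx
    by_contra hw
    have := hkey i j hij
    rw [if_neg hx, if_neg hw] at this; omega
  -- cardinalities
  have hcard1 : (Finset.univ.filter (fun k => y 6 k = 1)).card = 3 := by
    have : (∑ k, y 6 k) = ((Finset.univ.filter (fun k => y 6 k = 1)).card : ℤ) := by
      rw [← Finset.sum_boole (p := fun k => y 6 k = 1)]
      refine Finset.sum_congr rfl fun k _ => ?_
      rcases hy01 6 k with h | h <;> simp [h]
    rw [hysum 6] at this; omega
  have hcard0 : (Finset.univ.filter (fun k => y 6 k = 0)).card = 5 := by
    have hsplit := Finset.card_filter_add_card_filter_not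
      (s := (Finset.univ : Finset (Fin 8))) (p := fun k => y 6 k = 1)
    have heq : Finset.univ.filter (fun k => ¬ y 6 k = 1)
        = Finset.univ.filter (fun k => y 6 k = 0) := by
      refine Finset.filter_congr fun k _ => ?_
      rcases hy01 6 k with h | h <;> simp [h]
    rw [heq] at hsplit
    simp only [Finset.card_univ, Fintype.card_fin] at hsplit
    omega
  -- final pigeonhole
  by_cases hx01 : x 0 = x 1
  · -- all x equal, so all w distinct: 6 distinct elements in a 5-element set
    have hw01 : w 0 ≠ w 1 := key1 0 1 (by decide) hx01
    have hallx : ∀ i : Fin 6, x i = x 0 := by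
      intro i
      by_cases hi0 : i = 0
      · rw [hi0]
      · by_cases hi1 : i = 1
        · rw [hi1, ← hx01]
        · by_contra hne
          have e0 : w i = w 0 := key2 i 0 hi0 hne
          have e1 : w i = w 1 := key2 i 1 hi1 (by rw [← hx01]; exact hne)
          exact hw01 (e0 ▸ e1)
    have hwinj : ∀ i j : Fin 6, i ≠ j → w i ≠ w j := by
      intro i j hij
      exact key1 i j hij (by rw [hallx i, hallx j])
    have hle : (Finset.univ : Finset (Fin 6)).card
        ≤ (Finset.univ.filter (fun k => y 6 k = 0)).card := by
      apply Finset.card_le_card_of_injOn w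
      · intro i _
        simp only [Finset.coe_filter, Finset.mem_univ, true_and, Set.mem_setOf_eq]
        exact hw1 i
      · intro i _ j _ hww
        by_contra hij
        exact hwinj i j hij hww
    simp only [Finset.card_univ, Fintype.card_fin, hcard0] at hle
    omega
  · -- all w equal, so all x distinct: 6 distinct elements in a 3-element set
    have hw01 : w 0 = w 1 := key2 0 1 (by decide) hx01
    have hallw : ∀ i : Fin 6, w i = w 0 := by
      intro i
      by_cases hi0 : i = 0
      · rw [hi0]
      · by_cases hi1 : i = 1
        · rw [hi1, ← hw01]
        · by_contra hne
          have e0 : x i = x 0 := by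
            by_contra hxne
            exact hne (key2 i 0 hi0 hxne)
          have e1 : x i = x 1 := by
            by_contra hxne
            exact hne (by rw [key2 i 1 hi1 hxne, ← hw01])
          exact hx01 (e0 ▸ e1)
    have hxinj : ∀ i j : Fin 6, i ≠ j → x i ≠ x j := by
      intro i j hij hxx
      exact key1 i j hij hxx (by rw [hallw i, hallw j])
    have hle : (Finset.univ : Finset (Fin 6)).card
        ≤ (Finset.univ.filter (fun k => y 6 k = 1)).card := by
      apply Finset.card_le_card_of_injOn x
      · intro i _
        simp only [Finset.coe_filter, Finset.mem_univ, true_and, Set.mem_setOf_eq]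
        exact hx1 i
      · intro i _ j _ hxx
        by_contra hij
        exact hxinj i j hij hxx
    simp only [Finset.card_univ, Fintype.card_fin, hcard1] at hle
    omega

/-- The Goeritz form of `-9₂` plus a rank-one form `[-15]` does not embed into
the diagonal negative definite lattice `(ℤ⁸, -Id)`. -/
theorem stmt_8 :
    ¬ ∃ φ : (Fin 8 → ℤ) →ₗ[ℤ] (Fin 8 → ℤ),
      Function.Injective φ ∧
      ∀ i j : Fin 8, negPairing (φ (Pi.single i 1)) (φ (Pi.single j 1)) = gram9_2 i j := by
  rintro ⟨φ, -, hpair⟩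
  set v : Fin 8 → Fin 8 → ℤ := fun i => φ (Pi.single i 1) with hv
  have hdot : ∀ i j, (∑ k, v i k * v j k) = -gram9_2 i j := by
    intro i j
    have := hpair i j
    simp only [negPairing, hv] at this ⊢
    linarith
  refine no_seven (fun i k => ∑ a, cf i a * v a k) fun i j => ?_
  have hbil : (∑ k, (∑ a, cf i a * v a k) * (∑ b, cf j b * v b k))
      = ∑ a, ∑ b, cf i a * cf j b * (∑ k, v a k * v b k) := by
    simp_rw [Finset.sum_mul, Finset.mul_sum]
    rw [Finset.sum_comm]
    refine Finset.sum_congr rfl fun a _ => ?_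
    rw [Finset.sum_comm]
    refine Finset.sum_congr rfl fun b _ => ?_
    refine Finset.sum_congr rfl fun k _ => ?_
    ring
  rw [hbil, Finset.sum_congr rfl fun a _ => Finset.sum_congr rfl fun b _ => by rw [hdot a b]]
  clear hbil
  revert i j
  decide
end
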